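/- arXiv:2604.21009 — 4 statements merged into one kernel-verified Lean document; each statement's English description precedes it below -/
import Mathlib

section
/- The function h(D) = -(1/2)·log det(XᵀX + D) - c·log{b₀ + (1/2)(yᵀy - yᵀX(XᵀX + D)⁻¹Xᵀy)} is convex on the set of positive definite diagonal matrices D, for any constants b₀ > 0 and c > 0. -/
open Matrix Finset
section Aux
variable {m : Type*} [Fintype m] [DecidableEq m]


variable {m : Type*} [Fintype m] [DecidableEq m]

lemma pd_mulVec_inv {M : Matrix m m ℝ} (hM : M.PosDef) (v : m → ℝ) :
    M *ᵥ (M⁻¹ *ᵥ v) = v := by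
  rw [mulVec_mulVec, Matrix.mul_nonsing_inv _ hM.det_pos.ne'.isUnit, one_mulVec]

/-- affine minorant of the fractional function -/
lemma frac_minorant {M : Matrix m m ℝ} (hM : M.PosDef) (v w : m → ℝ) :
    2 * (w ⬝ᵥ v) - w ⬝ᵥ (M *ᵥ w) ≤ v ⬝ᵥ (M⁻¹ *ᵥ v) := by
  set u := M⁻¹ *ᵥ v with hu
  have hMu : M *ᵥ u = v := pd_mulVec_inv hM v
  have h0 : 0 ≤ (w - u) ⬝ᵥ (M *ᵥ (w - u)) := by
    simpa using hM.posSemidef.dotProduct_mulVec_nonneg (w - u)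
  have hsym : ∀ x z : m → ℝ, x ⬝ᵥ (M *ᵥ z) = (M *ᵥ x) ⬝ᵥ z := by
    intro x z
    rw [dotProduct_mulVec, ← vecMul_transpose, show Mᵀ = M from hM.isHermitian]
  have h1 : u ⬝ᵥ (M *ᵥ w) = v ⬝ᵥ w := by rw [hsym, hMu]
  have h2 : w ⬝ᵥ (M *ᵥ u) = w ⬝ᵥ v := by rw [hMu]
  have h3 : u ⬝ᵥ (M *ᵥ u) = v ⬝ᵥ u := by rw [hMu, dotProduct_comm]
  have hexp : (w - u) ⬝ᵥ (M *ᵥ (w - u))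
      = w ⬝ᵥ (M *ᵥ w) - v ⬝ᵥ w - w ⬝ᵥ v + v ⬝ᵥ u := by
    rw [mulVec_sub, dotProduct_sub, sub_dotProduct, sub_dotProduct, h1, h2, h3]
    ring
  have hc : w ⬝ᵥ v = v ⬝ᵥ w := dotProduct_comm _ _
  rw [← hu] at *
  linarith [hexp ▸ h0]

lemma posDef_combo {A B : Matrix m m ℝ} (hA : A.PosDef) (hB : B.PosDef) {a b : ℝ}
    (ha : 0 ≤ a) (hb : 0 ≤ b) (hab : a + b = 1) : (a • A + b • B).PosDef := by
  refine posDef_iff_dotProduct_mulVec.mpr ⟨?_, ?_⟩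
  · have hA' : Aᵀ = A := by simpa using hA.isHermitian.eq
    have hB' : Bᵀ = B := by simpa using hB.isHermitian.eq
    show (a • A + b • B)ᴴ = _
    simp [conjTranspose_add, conjTranspose_smul, hA', hB']
  · intro x hx
    have h1 := hA.dotProduct_mulVec_pos hx
    have h2 := hB.dotProduct_mulVec_pos hx
    simp only [star_trivial, add_mulVec, smul_mulVec, dotProduct_add,
      dotProduct_smul, smul_eq_mul] at *
    rcases ha.eq_or_lt with rfl | ha'
    · have hb1 : b = 1 := by linarith
      subst hb1; simpa using h2
    · have := mul_pos ha' h1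
      nlinarith [mul_nonneg hb h2.le]

lemma frac_convex {A B : Matrix m m ℝ} (hA : A.PosDef) (hB : B.PosDef) (v : m → ℝ) {a b : ℝ}
    (ha : 0 ≤ a) (hb : 0 ≤ b) (hab : a + b = 1) :
    v ⬝ᵥ ((a • A + b • B)⁻¹ *ᵥ v) ≤ a * (v ⬝ᵥ (A⁻¹ *ᵥ v)) + b * (v ⬝ᵥ (B⁻¹ *ᵥ v)) := by
  have hC : (a • A + b • B).PosDef := posDef_combo hA hB ha hb hab
  set w := (a • A + b • B)⁻¹ *ᵥ v with hw
  have heq : v ⬝ᵥ ((a • A + b • B)⁻¹ *ᵥ v)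
      = 2 * (w ⬝ᵥ v) - w ⬝ᵥ ((a • A + b • B) *ᵥ w) := by
    have hMw : (a • A + b • B) *ᵥ w = v := pd_mulVec_inv hC v
    rw [hMw, ← hw, dotProduct_comm]; ring
  have hsplit : w ⬝ᵥ ((a • A + b • B) *ᵥ w)
      = a * (w ⬝ᵥ (A *ᵥ w)) + b * (w ⬝ᵥ (B *ᵥ w)) := by
    simp [add_mulVec, smul_mulVec, dotProduct_add, dotProduct_smul]
  have hAi := frac_minorant hA v w
  have hBi := frac_minorant hB v w
  rw [heq, hsplit]
  have e1 := mul_le_mul_of_nonneg_left hAi ha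
  have e2 := mul_le_mul_of_nonneg_left hBi hb
  have e3 : a * (2 * (w ⬝ᵥ v) - w ⬝ᵥ (A *ᵥ w)) + b * (2 * (w ⬝ᵥ v) - w ⬝ᵥ (B *ᵥ w))
      = 2 * (w ⬝ᵥ v) - (a * (w ⬝ᵥ (A *ᵥ w)) + b * (w ⬝ᵥ (B *ᵥ w))) := by
    have : (a + b) * (2 * (w ⬝ᵥ v)) = 2 * (w ⬝ᵥ v) := by rw [hab, one_mul]
    nlinarith [this]
  linarith

lemma posDef_XtX_add_diag {n' : Type*} [Fintype n'] (X : Matrix n' m ℝ) {d : m → ℝ}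
    (hd : ∀ j, 0 < d j) : (Xᵀ * X + diagonal d).PosDef := by
  have hXX : (Xᵀ * X).PosSemidef := by
    have := posSemidef_conjTranspose_mul_self X
    simpa using this
  exact Matrix.PosDef.posSemidef_add hXX (Matrix.PosDef.diagonal hd)

lemma frac_bound {n' : Type*} [Fintype n'] (X : Matrix n' m ℝ) (y : n' → ℝ) {d : m → ℝ}
    (hd : ∀ j, 0 < d j) :
    (Xᵀ *ᵥ y) ⬝ᵥ ((Xᵀ * X + diagonal d)⁻¹ *ᵥ (Xᵀ *ᵥ y)) ≤ y ⬝ᵥ y := by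
  set M := Xᵀ * X + diagonal d with hMdef
  have hM : M.PosDef := posDef_XtX_add_diag X hd
  set v := Xᵀ *ᵥ y with hv
  set w := M⁻¹ *ᵥ v with hw
  have hMw : M *ᵥ w = v := pd_mulVec_inv hM v
  set s := v ⬝ᵥ w with hs
  have hs0 : 0 ≤ s := by
    have := hM.inv.posSemidef.dotProduct_mulVec_nonneg v
    simpa [← hw, ← hs] using this
  -- w ⬝ (M w) = w ⬝ v
  have hwMw : w ⬝ᵥ (M *ᵥ w) = s := by rw [hMw, dotProduct_comm, ← hs]
  -- (Xw)⬝(Xw) ≤ s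
  have hXw : (X *ᵥ w) ⬝ᵥ (X *ᵥ w) ≤ s := by
    have hsplit : w ⬝ᵥ (M *ᵥ w)
        = (X *ᵥ w) ⬝ᵥ (X *ᵥ w) + w ⬝ᵥ (diagonal d *ᵥ w) := by
      rw [hMdef, add_mulVec, dotProduct_add, ← mulVec_mulVec, dotProduct_mulVec,
        vecMul_transpose]
    have hdiag : 0 ≤ w ⬝ᵥ (diagonal d *ᵥ w) := by
      have := (Matrix.PosSemidef.diagonal (show 0 ≤ d from fun j => (hd j).le)).dotProduct_mulVec_nonneg w
      simpa using this
    rw [hsplit] at hwMw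
    linarith
  -- s = y ⬝ (X w)
  have hsy : s = y ⬝ᵥ (X *ᵥ w) := by
    rw [hs, hv, mulVec_transpose, ← dotProduct_mulVec]
  -- Cauchy-Schwarz
  have hCS : (y ⬝ᵥ (X *ᵥ w)) ^ 2 ≤ (y ⬝ᵥ y) * ((X *ᵥ w) ⬝ᵥ (X *ᵥ w)) := by
    have := Finset.sum_mul_sq_le_sq_mul_sq Finset.univ y (X *ᵥ w)
    simpa [dotProduct, sq] using this
  have hyy : 0 ≤ y ⬝ᵥ y := by
    simpa [dotProduct, ← sq] using Finset.sum_nonneg fun i _ => sq_nonneg (y i)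
  nlinarith [hCS, hXw, hs0, hsy, hyy]

open scoped MatrixOrder in
lemma logdet_concave {A B : Matrix m m ℝ} (hA : A.PosDef) (hB : B.PosDef) {a b : ℝ}
    (ha : 0 ≤ a) (hb : 0 ≤ b) (hab : a + b = 1) :
    a * Real.log A.det + b * Real.log B.det ≤ Real.log (a • A + b • B).det := by
  have hdetA : 0 < A.det := hA.det_pos
  have hdetB : 0 < B.det := hB.det_pos
  set S := CFC.sqrt A with hSdef
  have hS : S.PosSemidef := (CFC.sqrt_nonneg A).posSemidef
  have hSS : S * S = A := CFC.sqrt_mul_sqrt_self A hA.posSemidef.nonneg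
  have detS2 : S.det * S.det = A.det := by rw [← det_mul, hSS]
  have hdS : S.det ≠ 0 := by
    intro h; rw [h, mul_zero] at detS2; exact hdetA.ne detS2
  have hSu : IsUnit S.det := hdS.isUnit
  have hSinv : S * S⁻¹ = 1 := mul_nonsing_inv _ hSu
  have hSinv' : S⁻¹ * S = 1 := nonsing_inv_mul _ hSu
  have hSinvH : (S⁻¹)ᴴ = S⁻¹ := by rw [conjTranspose_nonsing_inv, hS.1.eq]
  set N := S⁻¹ * B * S⁻¹ with hNdef
  have hNps : N.PosSemidef := by
    have := hB.posSemidef.mul_mul_conjTranspose_same S⁻¹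
    rwa [hSinvH] at this
  have hSNS : S * N * S = B := by
    rw [hNdef]
    simp only [← Matrix.mul_assoc]
    rw [hSinv, Matrix.one_mul, Matrix.mul_assoc, hSinv', Matrix.mul_one]
  have detN : N.det = B.det / A.det := by
    rw [hNdef, det_mul, det_mul, det_nonsing_inv, Ring.inverse_eq_inv', ← detS2]
    field_simp
  have hdetN : 0 < N.det := detN ▸ div_pos hdetB hdetA
  set μ := hNps.1.eigenvalues with hμdef
  have prodμ : ∏ i, μ i = N.det := by
    have := hNps.1.det_eq_prod_eigenvalues
    simpa using this.symm
  have hμpos : ∀ i, 0 < μ i := by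
    intro i
    rcases (hNps.eigenvalues_nonneg i).eq_or_lt with h | h
    · exfalso
      have : ∏ j, μ j = 0 := Finset.prod_eq_zero (Finset.mem_univ i) h.symm
      rw [prodμ] at this; exact hdetN.ne' this
    · exact h
  -- key identity
  have key : a • A + b • B = S * (a • (1 : Matrix m m ℝ) + b • N) * S := by
    rw [Matrix.mul_add, Matrix.add_mul, Matrix.mul_smul, Matrix.smul_mul,
      Matrix.mul_smul, Matrix.smul_mul, Matrix.mul_one, hSS, hSNS]
  -- spectral computation of det (a•1 + b•N)
  set U := (hNps.1.eigenvectorUnitary : Matrix m m ℝ) with hUdef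
  have hU : U * star U = 1 := mem_unitaryGroup_iff.mp (hNps.1.eigenvectorUnitary).2
  have hsp : N = U * diagonal (RCLike.ofReal ∘ μ) * star U := hNps.1.spectral_theorem
  have hdiagcombo : a • (1 : Matrix m m ℝ) + b • diagonal (RCLike.ofReal ∘ μ)
      = diagonal (fun i => a + b * μ i) := by
    rw [← Matrix.diagonal_one, ← diagonal_smul, ← diagonal_smul, diagonal_add]
    congr 1
    funext i
    simp [RCLike.ofReal]
  have hcombo : a • (1 : Matrix m m ℝ) + b • N = U * diagonal (fun i => a + b * μ i) * star U := by
    rw [hsp, ← hdiagcombo, Matrix.mul_add, Matrix.add_mul, Matrix.mul_smul, Matrix.smul_mul,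
      Matrix.mul_smul, Matrix.smul_mul, Matrix.mul_one, hU]
  have hdetU : U.det * (star U).det = 1 := by rw [← det_mul, hU, det_one]
  have hdet2 : (a • (1 : Matrix m m ℝ) + b • N).det = ∏ i, (a + b * μ i) := by
    rw [hcombo, det_mul, det_mul, det_diagonal]
    calc U.det * (∏ i, (a + b * μ i)) * (star U).det
        = (U.det * (star U).det) * ∏ i, (a + b * μ i) := by ring
      _ = ∏ i, (a + b * μ i) := by rw [hdetU, one_mul]
  -- AM-GM
  have hamgm : N.det ^ b ≤ ∏ i, (a + b * μ i) := by
    rw [← prodμ, ← Real.finset_prod_rpow _ _ (fun i _ => (hμpos i).le)]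
    refine Finset.prod_le_prod (fun i _ => Real.rpow_nonneg (hμpos i).le b) (fun i _ => ?_)
    have := Real.geom_mean_le_arith_mean2_weighted ha hb zero_le_one (hμpos i).le hab
    simpa using this
  -- wrap up with logs
  have hdetkey : (a • A + b • B).det = A.det * (a • (1 : Matrix m m ℝ) + b • N).det := by
    rw [key, det_mul, det_mul, ← detS2]; ring
  have hrpos : 0 < N.det ^ b := Real.rpow_pos_of_pos hdetN b
  have hmono : Real.log (A.det * N.det ^ b) ≤ Real.log ((a • A + b • B).det) := by
    apply Real.log_le_log (mul_pos hdetA hrpos)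
    rw [hdetkey, hdet2]
    exact mul_le_mul_of_nonneg_left hamgm hdetA.le
  have hlogcalc : Real.log (A.det * N.det ^ b)
      = a * Real.log A.det + b * Real.log B.det := by
    rw [Real.log_mul hdetA.ne' hrpos.ne', Real.log_rpow hdetN, detN,
      Real.log_div hdetB.ne' hdetA.ne']
    have : a = 1 - b := by linarith
    rw [this]; ring
  linarith [hlogcalc ▸ hmono]


end Aux

/-- `h(D) = -(1/2)log det(XᵀX + D) - c·log{b₀ + (1/2)(yᵀy - yᵀX(XᵀX + D)⁻¹Xᵀy)}`
is convex on the set of positive definite diagonal matrices, for `b₀ > 0`, `c > 0`. -/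
theorem stmt2 (n p : ℕ) (X : Matrix (Fin n) (Fin p) ℝ) (y : Fin n → ℝ)
    (b0 c : ℝ) (hb0 : 0 < b0) (hc : 0 < c) :
    ConvexOn ℝ {d : Fin p → ℝ | ∀ j, 0 < d j}
      (fun d => -(1/2) * Real.log ((Xᵀ * X + Matrix.diagonal d).det)
        - c * Real.log (b0 + (1/2) * (y ⬝ᵥ y -
            (Xᵀ.mulVec y) ⬝ᵥ ((Xᵀ * X + Matrix.diagonal d)⁻¹).mulVec (Xᵀ.mulVec y)))) := by
  constructor
  · have hset : {d : Fin p → ℝ | ∀ j, 0 < d j} = Set.univ.pi (fun _ => Set.Ioi (0:ℝ)) := by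
      ext d; simp [Set.mem_pi, Set.mem_Ioi]
    rw [hset]; exact convex_pi (fun i _ => convex_Ioi 0)
  · intro d1 h1 d2 h2 a b ha hb hab
    simp only [Set.mem_setOf_eq] at h1 h2
    set v := Xᵀ *ᵥ y with hv
    set M1 := Xᵀ * X + diagonal d1 with hM1def
    set M2 := Xᵀ * X + diagonal d2 with hM2def
    have hM1 : M1.PosDef := posDef_XtX_add_diag X h1
    have hM2 : M2.PosDef := posDef_XtX_add_diag X h2
    have hdiag : diagonal (a • d1 + b • d2) = a • diagonal d1 + b • diagonal d2 := by
      rw [← diagonal_smul, ← diagonal_smul, diagonal_add]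
      rfl
    have hMcombo : Xᵀ * X + diagonal (a • d1 + b • d2) = a • M1 + b • M2 := by
      have hXX : a • (Xᵀ * X) + b • (Xᵀ * X) = Xᵀ * X := by rw [← add_smul, hab, one_smul]
      calc Xᵀ * X + diagonal (a • d1 + b • d2)
          = (a • (Xᵀ * X) + b • (Xᵀ * X)) + (a • diagonal d1 + b • diagonal d2) := by
            rw [hXX, hdiag]
        _ = a • M1 + b • M2 := by rw [hM1def, hM2def, smul_add, smul_add]; abel
    have hMc : (a • M1 + b • M2).PosDef := posDef_combo hM1 hM2 ha hb hab
    -- log det part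
    have t1 := logdet_concave hM1 hM2 ha hb hab
    -- fractional part
    have t2 := frac_convex hM1 hM2 v ha hb hab
    set q0 := v ⬝ᵥ ((a • M1 + b • M2)⁻¹ *ᵥ v) with hq0
    set q1 := v ⬝ᵥ (M1⁻¹ *ᵥ v) with hq1
    set q2 := v ⬝ᵥ (M2⁻¹ *ᵥ v) with hq2
    set r0 := b0 + (1/2) * (y ⬝ᵥ y - q0) with hr0def
    set r1 := b0 + (1/2) * (y ⬝ᵥ y - q1) with hr1def
    set r2 := b0 + (1/2) * (y ⬝ᵥ y - q2) with hr2def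
    have hq1b : q1 ≤ y ⬝ᵥ y := by rw [hq1, hv, hM1def]; exact frac_bound X y h1
    have hq2b : q2 ≤ y ⬝ᵥ y := by rw [hq2, hv, hM2def]; exact frac_bound X y h2
    have hr1pos : 0 < r1 := by rw [hr1def]; linarith
    have hr2pos : 0 < r2 := by rw [hr2def]; linarith
    have hsum : b0 ≤ a * r1 + b * r2 := by
      have e1 : a * b0 ≤ a * r1 := by
        apply mul_le_mul_of_nonneg_left _ ha; rw [hr1def]; linarith
      have e2 : b * b0 ≤ b * r2 := by
        apply mul_le_mul_of_nonneg_left _ hb; rw [hr2def]; linarith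
      nlinarith [e1, e2]
    have hr0ge : a * r1 + b * r2 ≤ r0 := by
      have e : a * r1 + b * r2 = (a + b) * (b0 + (1/2) * (y ⬝ᵥ y)) - (1/2) * (a * q1 + b * q2) := by
        rw [hr1def, hr2def]; ring
      rw [hab, one_mul] at e
      rw [hr0def]
      linarith [t2]
    have hsumpos : 0 < a * r1 + b * r2 := lt_of_lt_of_le hb0 hsum
    have hlogmono : Real.log (a * r1 + b * r2) ≤ Real.log r0 := Real.log_le_log hsumpos hr0ge
    have hlogconc : a * Real.log r1 + b * Real.log r2 ≤ Real.log (a * r1 + b * r2) := by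
      have := strictConcaveOn_log_Ioi.concaveOn.2 (Set.mem_Ioi.mpr hr1pos)
        (Set.mem_Ioi.mpr hr2pos) ha hb hab
      simpa [smul_eq_mul] using this
    have m2 : a * Real.log r1 + b * Real.log r2 ≤ Real.log r0 := le_trans hlogconc hlogmono
    have cm2 := mul_le_mul_of_nonneg_left m2 hc.le
    -- final assembly
    simp only [smul_eq_mul]
    rw [hMcombo]
    show -(1/2) * Real.log ((a • M1 + b • M2).det) - c * Real.log r0
      ≤ a * (-(1/2) * Real.log (M1.det) - c * Real.log r1)
        + b * (-(1/2) * Real.log (M2.det) - c * Real.log r2)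
    nlinarith [t1, cm2]
end

section
/- With the same partition, the j-th coordinate of (XᵀX + D)⁻¹Xᵀy equals (xⱼᵀPⱼy)/(dⱼ + xⱼᵀPⱼxⱼ), where Pⱼ = Iₙ - X₋ⱼ(X₋ⱼᵀX₋ⱼ + D₋ⱼ)⁻¹X₋ⱼᵀ. -/
open Matrix

/-- The full design matrix `X = [xⱼ, X₋ⱼ]` with the `j`-th column separated out. -/
noncomputable def Xfull {n p : ℕ} (x : Fin n → ℝ) (Xm : Matrix (Fin n) (Fin p) ℝ) :
    Matrix (Fin n) (Unit ⊕ Fin p) ℝ :=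
  Matrix.fromCols (fun i _ => x i) Xm

/-- `Pⱼ = Iₙ - X₋ⱼ(X₋ⱼᵀX₋ⱼ + D₋ⱼ)⁻¹X₋ⱼᵀ`. -/
noncomputable def Pmat {n p : ℕ} (Xm : Matrix (Fin n) (Fin p) ℝ) (dm : Fin p → ℝ) :
    Matrix (Fin n) (Fin n) ℝ :=
  1 - Xm * (Xmᵀ * Xm + Matrix.diagonal dm)⁻¹ * Xmᵀ

/-- The `j`-th coordinate of `(XᵀX + D)⁻¹Xᵀy` equals `(xⱼᵀPⱼy)/(dⱼ + xⱼᵀPⱼxⱼ)`. -/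
theorem stmt5 {n p : ℕ} (x : Fin n → ℝ) (Xm : Matrix (Fin n) (Fin p) ℝ)
    (y : Fin n → ℝ) (dj : ℝ) (hdj : 0 < dj) (dm : Fin p → ℝ) (hdm : ∀ j, 0 < dm j) :
    ((((Xfull x Xm)ᵀ * Xfull x Xm
        + Matrix.diagonal (Sum.elim (fun _ => dj) dm))⁻¹).mulVec
          ((Xfull x Xm)ᵀ.mulVec y)) (Sum.inl ())
      = (x ⬝ᵥ (Pmat Xm dm).mulVec y) / (dj + x ⬝ᵥ (Pmat Xm dm).mulVec x) := by
  classical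
  set M : Matrix (Fin p) (Fin p) ℝ := Xmᵀ * Xm + Matrix.diagonal dm with hMdef
  -- M is positive definite, hence invertible
  have hMpd : M.PosDef := by
    exact Matrix.PosDef.posSemidef_add
      (by simpa [Matrix.conjTranspose_eq_transpose_of_trivial] using
        Matrix.posSemidef_conjTranspose_mul_self Xm)
      (Matrix.PosDef.diagonal hdm)
  have hMunit : IsUnit M.det := by
    exact hMpd.det_pos.ne'.isUnit
  have hMM : M * M⁻¹ = 1 := Matrix.mul_nonsing_inv M hMunit
  have hMM' : M⁻¹ * M = 1 := Matrix.nonsing_inv_mul M hMunit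
  -- notation
  set P : Matrix (Fin n) (Fin n) ℝ := Pmat Xm dm with hPdef
  have hPeq : Xm * M⁻¹ * Xmᵀ = 1 - P := by
    simp [hPdef, Pmat, hMdef]
  -- nonnegativity of x ⬝ Px
  set u : Fin p → ℝ := M⁻¹ *ᵥ (Xmᵀ *ᵥ x) with hu
  have hMu : M *ᵥ u = Xmᵀ *ᵥ x := by
    rw [hu, Matrix.mulVec_mulVec, hMM, Matrix.one_mulVec]
  have hxXmu : x ⬝ᵥ (Xm *ᵥ u) = (M *ᵥ u) ⬝ᵥ u := by
    rw [hMu, Matrix.dotProduct_mulVec, ← Matrix.mulVec_transpose]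
  have hMuu : (M *ᵥ u) ⬝ᵥ u = (Xm *ᵥ u) ⬝ᵥ (Xm *ᵥ u) + u ⬝ᵥ (Matrix.diagonal dm *ᵥ u) := by
    rw [hMdef, Matrix.add_mulVec, add_dotProduct]
    congr 1
    · rw [← Matrix.mulVec_mulVec, Matrix.mulVec_transpose, ← Matrix.dotProduct_mulVec]
    · rw [dotProduct_comm]
  have hPx : P *ᵥ x = x - Xm *ᵥ u := by
    have : P = 1 - Xm * M⁻¹ * Xmᵀ := by simp [hPdef, Pmat, hMdef]
    rw [this, Matrix.sub_mulVec, Matrix.one_mulVec]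
    congr 1
    rw [Matrix.mul_assoc, ← Matrix.mulVec_mulVec, ← Matrix.mulVec_mulVec]
  have hxPx : x ⬝ᵥ (P *ᵥ x)
      = (x - Xm *ᵥ u) ⬝ᵥ (x - Xm *ᵥ u) + u ⬝ᵥ (Matrix.diagonal dm *ᵥ u) := by
    rw [hPx]
    have expand : (x - Xm *ᵥ u) ⬝ᵥ (x - Xm *ᵥ u)
        = x ⬝ᵥ x - 2 * (x ⬝ᵥ (Xm *ᵥ u)) + (Xm *ᵥ u) ⬝ᵥ (Xm *ᵥ u) := by
      simp [sub_dotProduct, dotProduct_sub]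
      rw [dotProduct_comm (Xm *ᵥ u) x]
      ring
    rw [expand]
    have := hxXmu.trans hMuu
    linarith [dotProduct_sub x x (Xm *ᵥ u)]
  have hxPx_nonneg : 0 ≤ x ⬝ᵥ (P *ᵥ x) := by
    rw [hxPx]
    apply add_nonneg
    · exact Finset.sum_nonneg fun i _ => mul_self_nonneg _
    · apply Finset.sum_nonneg
      intro i _
      simp [Matrix.mulVec_diagonal]
      have := (hdm i).le
      nlinarith [mul_self_nonneg (u i)]
  set s : ℝ := dj + x ⬝ᵥ (P *ᵥ x) with hs
  have hspos : 0 < s := by positivity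
  set v0 : ℝ := (x ⬝ᵥ (P *ᵥ y)) / s with hv0
  set w : Fin p → ℝ := M⁻¹ *ᵥ (Xmᵀ *ᵥ y - v0 • (Xmᵀ *ᵥ x)) with hw
  have hMw : M *ᵥ w = Xmᵀ *ᵥ y - v0 • (Xmᵀ *ᵥ x) := by
    rw [hw, Matrix.mulVec_mulVec, hMM, Matrix.one_mulVec]
  -- the full matrix A
  set C : Matrix (Fin n) Unit ℝ := fun i _ => x i with hC
  have hX : Xfull x Xm = Matrix.fromCols C Xm := rfl
  set A : Matrix (Unit ⊕ Fin p) (Unit ⊕ Fin p) ℝ :=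
    (Xfull x Xm)ᵀ * Xfull x Xm + Matrix.diagonal (Sum.elim (fun _ => dj) dm) with hA
  have hAblocks : A = Matrix.fromBlocks
      (Cᵀ * C + Matrix.diagonal (fun _ => dj)) (Cᵀ * Xm) (Xmᵀ * C) M := by
    rw [hA, hX, Matrix.transpose_fromCols, Matrix.fromRows_mul_fromCols,
      ← Matrix.fromBlocks_diagonal, hMdef, Matrix.fromBlocks_add]
    congr 1 <;> simp
  -- A is positive definite hence invertible
  have hApd : A.PosDef := by
    rw [hA]
    refine Matrix.PosDef.posSemidef_add
      (by simpa [Matrix.conjTranspose_eq_transpose_of_trivial] using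
        Matrix.posSemidef_conjTranspose_mul_self (Xfull x Xm))
      (Matrix.PosDef.diagonal ?_)
    rintro (i | i)
    · exact hdj
    · exact hdm i
  have hAunit : IsUnit A.det := hApd.det_pos.ne'.isUnit
  -- key: A *ᵥ v = Xᵀ *ᵥ y
  set v : Unit ⊕ Fin p → ℝ := Sum.elim (fun _ => v0) w with hv
  have hxXmw : x ⬝ᵥ (Xm *ᵥ w) = x ⬝ᵥ ((1 - P) *ᵥ y) - v0 * (x ⬝ᵥ ((1 - P) *ᵥ x)) := by
    have : Xm *ᵥ w = (Xm * M⁻¹) *ᵥ (Xmᵀ *ᵥ y - v0 • (Xmᵀ *ᵥ x)) := by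
      rw [hw, Matrix.mulVec_mulVec]
    rw [this, Matrix.mulVec_sub, Matrix.mulVec_smul, dotProduct_sub,
      dotProduct_smul]
    rw [Matrix.mulVec_mulVec, Matrix.mulVec_mulVec, hPeq]
    ring_nf
  have hkey : A *ᵥ v = (Xfull x Xm)ᵀ *ᵥ y := by
    rw [hAblocks, hv]
    have h1 : (Sum.elim (fun _ : Unit => v0) w) ∘ (Sum.inl : Unit → Unit ⊕ Fin p)
        = fun _ => v0 := rfl
    have h2 : (Sum.elim (fun _ : Unit => v0) w) ∘ (Sum.inr : Fin p → Unit ⊕ Fin p) = w := rfl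
    rw [Matrix.fromBlocks_mulVec, h1, h2, hX, Matrix.transpose_fromCols,
      Matrix.fromRows_mulVec]
    funext i
    rcases i with ⟨⟩ | j
    · simp only [Sum.elim_inl, Pi.add_apply]
      have lhs1 : ((Cᵀ * C + Matrix.diagonal fun _ => dj) *ᵥ fun _ => v0) ()
          = (x ⬝ᵥ x + dj) * v0 := by
        simp only [Matrix.mul_apply, Matrix.transpose_apply, Matrix.mulVec, dotProduct, Matrix.add_apply]
        simp [Matrix.mulVec, dotProduct, Matrix.mul_apply, hC, Finset.sum_mul,
          Matrix.diagonal, add_mul]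
      have lhs2 : ((Cᵀ * Xm) *ᵥ w) () = x ⬝ᵥ (Xm *ᵥ w) := by
        rw [← Matrix.mulVec_mulVec]
        simp only [Matrix.mul_apply, Matrix.transpose_apply, Matrix.mulVec, dotProduct]
        simp [Matrix.mulVec, dotProduct, hC]
      have lhs3 : (Cᵀ *ᵥ y) () = x ⬝ᵥ y := by
        simp only [Matrix.mul_apply, Matrix.transpose_apply, Matrix.mulVec, dotProduct]
        simp [Matrix.mulVec, dotProduct, hC]
      rw [lhs1, lhs2, lhs3, hxXmw]
      have hones : x ⬝ᵥ ((1 - P) *ᵥ y) = x ⬝ᵥ y - x ⬝ᵥ (P *ᵥ y) := by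
        rw [Matrix.sub_mulVec, Matrix.one_mulVec, dotProduct_sub]
      have hones' : x ⬝ᵥ ((1 - P) *ᵥ x) = x ⬝ᵥ x - x ⬝ᵥ (P *ᵥ x) := by
        rw [Matrix.sub_mulVec, Matrix.one_mulVec, dotProduct_sub]
      rw [hones, hones']
      have hv0s : v0 * s = x ⬝ᵥ (P *ᵥ y) := by
        rw [hv0]; field_simp
      rw [hs] at hv0s
      ring_nf
      ring_nf at hv0s
      linarith
    · simp only [Sum.elim_inr, Pi.add_apply]
      have hBC : (Xmᵀ * C) *ᵥ (fun _ => v0) = v0 • (Xmᵀ *ᵥ x) := by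
        funext j
        simp only [Matrix.mul_apply, Matrix.transpose_apply, Matrix.mulVec, dotProduct]
        simp [Matrix.mulVec, dotProduct, Matrix.mul_apply, hC, Finset.sum_mul,
          mul_comm]
      have hfin : ((Xmᵀ * C) *ᵥ fun _ => v0) + M *ᵥ w = Xmᵀ *ᵥ y := by
        rw [hBC, hMw]; abel
      exact congrFun hfin j
  -- conclude
  have : A⁻¹ *ᵥ ((Xfull x Xm)ᵀ *ᵥ y) = v := by
    rw [← hkey, Matrix.mulVec_mulVec, Matrix.nonsing_inv_mul A hAunit, Matrix.one_mulVec]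
  show (A⁻¹ *ᵥ ((Xfull x Xm)ᵀ *ᵥ y)) (Sum.inl ()) = _
  rw [this]
  simp [hv, hv0, hs]
end

section
/- The residual-sum-of-squares decomposition: RSS(D) := yᵀy - yᵀX(XᵀX + D)⁻¹Xᵀy satisfies RSS(D) = yᵀPⱼy - (xⱼᵀPⱼy)²/(dⱼ + xⱼᵀPⱼxⱼ), where Pⱼ = Iₙ - X₋ⱼ(X₋ⱼᵀX₋ⱼ + D₋ⱼ)⁻¹X₋ⱼᵀ. -/
open Matrix

lemma mul_vecMulVec' {m n : Type*} [Fintype n] (A : Matrix m n ℝ) (u : n → ℝ) (v : m → ℝ) :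
    A * vecMulVec u v = vecMulVec (A *ᵥ u) v := by
  ext i j
  simp [Matrix.mul_apply, vecMulVec_apply, Matrix.mulVec, dotProduct, Finset.sum_mul, mul_assoc]

lemma vecMulVec_mul' {m n : Type*} [Fintype n] (u : m → ℝ) (v : n → ℝ) (A : Matrix n n ℝ) :
    vecMulVec u v * A = vecMulVec u (v ᵥ* A) := by
  ext i j
  simp [Matrix.mul_apply, vecMulVec_apply, Matrix.vecMul, dotProduct, Finset.mul_sum, mul_assoc]

lemma vecMulVec_mul_vecMulVec' {m n : Type*} [Fintype n] (a : m → ℝ) (b c : n → ℝ) (d : m → ℝ) :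
    vecMulVec a b * vecMulVec c d = (b ⬝ᵥ c) • vecMulVec a d := by
  ext i j
  simp [Matrix.mul_apply, vecMulVec_apply, dotProduct, Finset.sum_mul, Finset.mul_sum]
  ring_nf
  congr 1
  ext k
  ring

lemma vecMulVec_mulVec' {m n : Type*} [Fintype n] (u : m → ℝ) (v : n → ℝ) (y : n → ℝ) :
    vecMulVec u v *ᵥ y = (v ⬝ᵥ y) • u := by
  ext i
  simp only [vecMulVec_apply, Matrix.mulVec, dotProduct, Pi.smul_apply, smul_eq_mul,
    Finset.sum_mul]
  apply Finset.sum_congr rfl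
  intro k _
  ring

lemma woodbury' {n p : Type*} [Fintype n] [Fintype p] [DecidableEq n] [DecidableEq p]
    (X : Matrix n p ℝ) (D : Matrix p p ℝ) (hD : IsUnit D.det)
    (hA : IsUnit (Xᵀ * X + D).det) :
    (1 + X * D⁻¹ * Xᵀ)⁻¹ = 1 - X * (Xᵀ * X + D)⁻¹ * Xᵀ := by
  apply inv_eq_right_inv
  set A := Xᵀ * X + D with hAdef
  have key : D⁻¹ * (Xᵀ * X) * A⁻¹ = D⁻¹ - A⁻¹ := by
    have h1 : Xᵀ * X = A - D := by rw [hAdef]; abel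
    rw [h1, Matrix.mul_sub, Matrix.sub_mul, Matrix.mul_assoc D⁻¹ A A⁻¹,
      Matrix.mul_nonsing_inv _ hA, Matrix.mul_one, Matrix.nonsing_inv_mul _ hD,
      Matrix.one_mul]
  have hBC : (X * D⁻¹ * Xᵀ) * (X * A⁻¹ * Xᵀ) = X * D⁻¹ * Xᵀ - X * A⁻¹ * Xᵀ := by
    have : (X * D⁻¹ * Xᵀ) * (X * A⁻¹ * Xᵀ) = X * (D⁻¹ * (Xᵀ * X) * A⁻¹) * Xᵀ := by
      simp only [Matrix.mul_assoc]
    rw [this, key, Matrix.mul_sub, Matrix.sub_mul]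
  rw [Matrix.add_mul, Matrix.one_mul, Matrix.mul_sub, Matrix.mul_one, hBC]
  abel

lemma inv_diag_ne {ι : Type*} [Fintype ι] [DecidableEq ι] (v : ι → ℝ) (h : ∀ i, v i ≠ 0) :
    (Matrix.diagonal v)⁻¹ = Matrix.diagonal (fun i => (v i)⁻¹) := by
  apply inv_eq_right_inv
  ext i j
  rcases eq_or_ne i j with rfl | hij
  · simp [Matrix.mul_apply, Matrix.diagonal_apply, Matrix.one_apply,
      mul_inv_cancel₀ (h i)]
  · simp [Matrix.mul_apply, Matrix.diagonal_apply, Matrix.one_apply, hij]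

lemma blockD' {n p : ℕ} (x : Fin n → ℝ) (Xm : Matrix (Fin n) (Fin p) ℝ) (dj : ℝ)
    (hdj : dj ≠ 0) (dm : Fin p → ℝ) (hdm : ∀ j, dm j ≠ 0) :
    Xfull x Xm * ((Matrix.diagonal (Sum.elim (fun _ => dj) dm))⁻¹ : Matrix (Unit ⊕ Fin p) (Unit ⊕ Fin p) ℝ) * (Xfull x Xm)ᵀ
      = dj⁻¹ • vecMulVec x x + Xm * (Matrix.diagonal dm)⁻¹ * Xmᵀ := by
  rw [inv_diag_ne _ (by rintro (i | j) <;> simp [hdj, hdm]),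
    inv_diag_ne _ (fun j => hdm j)]
  ext i k
  simp [Xfull, Matrix.mul_apply, Matrix.diagonal_apply,
    Fintype.sum_sum_type, fromCols, vecMulVec_apply,
    transpose_apply, mul_comm, mul_assoc, mul_left_comm]

/-- RSS decomposition:
`yᵀy - yᵀX(XᵀX + D)⁻¹Xᵀy = yᵀPⱼy - (xⱼᵀPⱼy)²/(dⱼ + xⱼᵀPⱼxⱼ)`. -/
theorem stmt6 {n p : ℕ} (x : Fin n → ℝ) (Xm : Matrix (Fin n) (Fin p) ℝ)
    (y : Fin n → ℝ) (dj : ℝ) (hdj : 0 < dj) (dm : Fin p → ℝ) (hdm : ∀ j, 0 < dm j) :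
    y ⬝ᵥ y - ((Xfull x Xm)ᵀ.mulVec y) ⬝ᵥ
        (((Xfull x Xm)ᵀ * Xfull x Xm
          + Matrix.diagonal (Sum.elim (fun _ => dj) dm))⁻¹).mulVec ((Xfull x Xm)ᵀ.mulVec y)
      = y ⬝ᵥ (Pmat Xm dm).mulVec y
        - (x ⬝ᵥ (Pmat Xm dm).mulVec y)^2 / (dj + x ⬝ᵥ (Pmat Xm dm).mulVec x) := by
  classical
  set X := Xfull x Xm with hXdef
  set Dm := Matrix.diagonal dm with hDmdef
  set M := Xmᵀ * Xm + Dm with hMdef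
  set D := Matrix.diagonal (Sum.elim (fun _ : Unit => dj) dm) with hDdef
  set A := Xᵀ * X + D with hAdef
  have hPM : Pmat Xm dm = 1 - Xm * M⁻¹ * Xmᵀ := rfl
  set P := 1 - Xm * M⁻¹ * Xmᵀ with hPdef
  -- positivity facts
  have hDmpos : Dm.PosDef := Matrix.posDef_diagonal_iff.mpr hdm
  have hXmXm : (Xmᵀ * Xm).PosSemidef := by
    simpa [Matrix.conjTranspose_eq_transpose_of_trivial] using
      Matrix.posSemidef_conjTranspose_mul_self Xm
  have hMpos : M.PosDef := Matrix.PosDef.posSemidef_add hXmXm hDmpos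
  have hMdet : IsUnit M.det := hMpos.det_pos.ne'.isUnit
  have hDpos : D.PosDef := Matrix.posDef_diagonal_iff.mpr (by rintro (i | j) <;> simp [hdj, hdm])
  have hXX : (Xᵀ * X).PosSemidef := by
    simpa [Matrix.conjTranspose_eq_transpose_of_trivial] using
      Matrix.posSemidef_conjTranspose_mul_self X
  have hApos : A.PosDef := Matrix.PosDef.posSemidef_add hXX hDpos
  have hAdet : IsUnit A.det := hApos.det_pos.ne'.isUnit
  have hDdet : IsUnit D.det := hDpos.det_pos.ne'.isUnit
  have hDmdet : IsUnit Dm.det := hDmpos.det_pos.ne'.isUnit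
  -- symmetry of P
  have hMsym : Mᵀ = M := by
    have := hMpos.isHermitian
    simpa [Matrix.IsHermitian, Matrix.conjTranspose_eq_transpose_of_trivial] using this
  have hPsym : Pᵀ = P := by
    rw [hPdef, transpose_sub, transpose_one, transpose_mul, transpose_mul,
      transpose_transpose, transpose_nonsing_inv, hMsym, Matrix.mul_assoc]
  -- Q and its inverse
  set Q := 1 + Xm * Dm⁻¹ * Xmᵀ with hQdef
  have hQpos : Q.PosDef := by
    refine Matrix.PosDef.add_posSemidef Matrix.PosDef.one ?_
    simpa [Matrix.conjTranspose_eq_transpose_of_trivial] using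
      hDmpos.inv.posSemidef.mul_mul_conjTranspose_same Xm
  have hQinv : Q⁻¹ = P := woodbury' Xm Dm hDmdet hMdet
  have hQdet : IsUnit Q.det := hQpos.det_pos.ne'.isUnit
  have hQmulP : Q * P = 1 := by rw [← hQinv]; exact Matrix.mul_nonsing_inv _ hQdet
  have hPpsd : P.PosSemidef := by rw [← hQinv]; exact hQpos.inv.posSemidef
  have hxPx : 0 ≤ x ⬝ᵥ P *ᵥ x := by simpa using hPpsd.dotProduct_mulVec_nonneg x
  set s := dj + x ⬝ᵥ P *ᵥ x with hsdef
  have hs0 : 0 < s := add_pos_of_pos_of_nonneg hdj hxPx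
  have hs : s ≠ 0 := hs0.ne'
  set u := P *ᵥ x with hudef
  have hPxvec : P *ᵥ x = x ᵥ* P := by
    conv_rhs => rw [← hPsym]
    rw [vecMul_transpose]
  have hxu : x ⬝ᵥ u = x ⬝ᵥ P *ᵥ x := rfl
  have hquad : (Xᵀ *ᵥ y) ⬝ᵥ (A⁻¹ *ᵥ (Xᵀ *ᵥ y)) = y ⬝ᵥ ((X * A⁻¹ * Xᵀ) *ᵥ y) := by
    rw [← Matrix.mulVec_mulVec, ← Matrix.mulVec_mulVec, Matrix.dotProduct_mulVec y,
      ← Matrix.mulVec_transpose]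
  have huy : u ⬝ᵥ y = x ⬝ᵥ P *ᵥ y := by
    rw [hudef, hPxvec, ← Matrix.dotProduct_mulVec]
  clear_value u s Q P A D M Dm X
  -- Sherman–Morrison
  have hSM : (Q + dj⁻¹ • vecMulVec x x)⁻¹ = P - s⁻¹ • vecMulVec u u := by
    apply inv_eq_right_inv
    have h2 : Q * vecMulVec u u = vecMulVec x u := by
      rw [mul_vecMulVec', hudef, Matrix.mulVec_mulVec, hQmulP, Matrix.one_mulVec]
    have h3 : vecMulVec x x * P = vecMulVec x u := by
      rw [vecMulVec_mul', hudef, hPxvec]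
    have h4 : vecMulVec x x * vecMulVec u u = (x ⬝ᵥ u) • vecMulVec x u :=
      vecMulVec_mul_vecMulVec' x x u u
    rw [Matrix.add_mul, Matrix.mul_sub, Matrix.mul_sub, hQmulP, Matrix.mul_smul, h2,
      Matrix.smul_mul, Matrix.smul_mul, h3, Matrix.mul_smul, h4]
    have hc : dj⁻¹ • vecMulVec x u - dj⁻¹ • (s⁻¹ • ((x ⬝ᵥ u) • vecMulVec x u))
        = s⁻¹ • vecMulVec x u := by
      rw [smul_smul, smul_smul, ← sub_smul]
      congr 1
      have hs' : dj + x ⬝ᵥ u ≠ 0 := by rw [← hsdef]; exact hs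
      rw [hsdef]
      field_simp
      ring
    calc 1 - s⁻¹ • vecMulVec x u + (dj⁻¹ • vecMulVec x u
            - dj⁻¹ • (s⁻¹ • ((x ⬝ᵥ u) • vecMulVec x u)))
        = 1 - s⁻¹ • vecMulVec x u + s⁻¹ • vecMulVec x u := by rw [hc]
      _ = 1 := by abel
  -- main matrix identity
  have hkey : 1 - X * A⁻¹ * Xᵀ = P - s⁻¹ • vecMulVec u u := by
    have hAdet' : IsUnit (Xᵀ * X + D).det := by rw [← hAdef]; exact hAdet
    rw [hAdef, ← woodbury' X D hDdet hAdet', hXdef, hDdef,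
      blockD' x Xm dj hdj.ne' dm (fun j => (hdm j).ne'), ← hSM]
    congr 1
    rw [hQdef, hDmdef]
    abel
  have hfinal : y ⬝ᵥ y - y ⬝ᵥ ((X * A⁻¹ * Xᵀ) *ᵥ y)
      = y ⬝ᵥ ((1 - X * A⁻¹ * Xᵀ) *ᵥ y) := by
    rw [Matrix.sub_mulVec, Matrix.one_mulVec, dotProduct_sub]
  have hyu : y ⬝ᵥ u = x ⬝ᵥ P *ᵥ y := by
    rw [dotProduct_comm, huy]
  rw [hPM, hquad, hfinal, hkey, Matrix.sub_mulVec, dotProduct_sub, Matrix.smul_mulVec,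
    vecMulVec_mulVec', dotProduct_smul, dotProduct_smul, huy, hyu,
    show dj + x ⬝ᵥ P *ᵥ x = s from by rw [hsdef, hxu], smul_eq_mul, smul_eq_mul]
  field_simp
end

section
/- Coordinate-wise divergence criterion: with loss(D) = -(1/2)log det D + (1/2)log det(XᵀX+D) + (a₀+n/2)·log{b₀ + RSS(D)/2}, its partial derivative in dⱼ equals -xⱼᵀPⱼxⱼ/[2dⱼ(dⱼ+xⱼᵀPⱼxⱼ)] + (a₀+n/2)·(xⱼᵀPⱼy)²/[2(b₀+RSS(D)/2)(dⱼ+xⱼᵀPⱼxⱼ)²], and this derivative is strictly negative for all dⱼ > 0 whenever (xⱼᵀPⱼy)² < (b₀ + yᵀPⱼy/2)·xⱼᵀPⱼxⱼ/(a₀+n/2). -/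
open Matrix

/-- `RSS(D) = yᵀy - yᵀX(XᵀX + D)⁻¹Xᵀy` as a function of the `j`-th precision `dⱼ`. -/
noncomputable def RSS {n p : ℕ} (x : Fin n → ℝ) (Xm : Matrix (Fin n) (Fin p) ℝ)
    (y : Fin n → ℝ) (dm : Fin p → ℝ) (dj : ℝ) : ℝ :=
  y ⬝ᵥ y - ((Xfull x Xm)ᵀ.mulVec y) ⬝ᵥ
    (((Xfull x Xm)ᵀ * Xfull x Xm
      + Matrix.diagonal (Sum.elim (fun _ => dj) dm))⁻¹).mulVec ((Xfull x Xm)ᵀ.mulVec y)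

set_option maxHeartbeats 1600000

section Aux

variable {n p : ℕ}

lemma mm_posDef (Xm : Matrix (Fin n) (Fin p) ℝ) (dm : Fin p → ℝ) (hdm : ∀ j, 0 < dm j) :
    (Xmᵀ * Xm + Matrix.diagonal dm).PosDef := by
  have h1 : (Xmᵀ * Xm).PosSemidef := by
    simpa [Matrix.conjTranspose_eq_transpose_of_trivial] using
      Matrix.posSemidef_conjTranspose_mul_self Xm
  exact Matrix.PosDef.posSemidef_add h1 (Matrix.PosDef.diagonal hdm)

lemma mm_symm (Xm : Matrix (Fin n) (Fin p) ℝ) (dm : Fin p → ℝ) :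
    (Xmᵀ * Xm + Matrix.diagonal dm)ᵀ = Xmᵀ * Xm + Matrix.diagonal dm := by
  simp [Matrix.transpose_add, Matrix.transpose_mul]

lemma P_symm (Xm : Matrix (Fin n) (Fin p) ℝ) (dm : Fin p → ℝ) :
    (Pmat Xm dm)ᵀ = Pmat Xm dm := by
  have h : ((Xmᵀ * Xm + Matrix.diagonal dm)⁻¹)ᵀ = (Xmᵀ * Xm + Matrix.diagonal dm)⁻¹ := by
    rw [Matrix.transpose_nonsing_inv, mm_symm]
  simp [Pmat, Matrix.transpose_sub, Matrix.transpose_mul, h, Matrix.mul_assoc]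

lemma dot_P (Xm : Matrix (Fin n) (Fin p) ℝ) (dm : Fin p → ℝ) (v w : Fin n → ℝ) :
    v ⬝ᵥ (Pmat Xm dm) *ᵥ w
      = v ⬝ᵥ w - (Xmᵀ *ᵥ v) ⬝ᵥ ((Xmᵀ * Xm + Matrix.diagonal dm)⁻¹ *ᵥ (Xmᵀ *ᵥ w)) := by
  set N := (Xmᵀ * Xm + Matrix.diagonal dm)⁻¹
  have : (Xm * N * Xmᵀ) *ᵥ w = Xm *ᵥ (N *ᵥ (Xmᵀ *ᵥ w)) := by
    simp [Matrix.mulVec_mulVec, Matrix.mul_assoc]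
  rw [Pmat, Matrix.sub_mulVec, dotProduct_sub, Matrix.one_mulVec, this,
    Matrix.dotProduct_mulVec v Xm, ← Matrix.mulVec_transpose, Matrix.dotProduct_mulVec]

lemma dot_self_nonneg {m : ℕ} (w : Fin m → ℝ) : 0 ≤ w ⬝ᵥ w :=
  Finset.sum_nonneg fun _ _ => mul_self_nonneg _

lemma P_psd (Xm : Matrix (Fin n) (Fin p) ℝ) (dm : Fin p → ℝ) (hdm : ∀ j, 0 < dm j)
    (v : Fin n → ℝ) : 0 ≤ v ⬝ᵥ (Pmat Xm dm) *ᵥ v := by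
  set Mm := Xmᵀ * Xm + Matrix.diagonal dm with hMm
  have hpd := mm_posDef Xm dm hdm
  have hdet : IsUnit Mm.det := hpd.det_pos.ne'.isUnit
  set z := Mm⁻¹ *ᵥ (Xmᵀ *ᵥ v) with hz
  have hMz : Mm *ᵥ z = Xmᵀ *ᵥ v := by
    rw [hz, Matrix.mulVec_mulVec, Matrix.mul_nonsing_inv _ hdet, Matrix.one_mulVec]
  have h1 : (Xmᵀ *ᵥ v) ⬝ᵥ z = v ⬝ᵥ (Xm *ᵥ z) := by
    rw [Matrix.mulVec_transpose, ← Matrix.dotProduct_mulVec]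
  have h2 : v ⬝ᵥ (Xm *ᵥ z) = (Xm *ᵥ z) ⬝ᵥ (Xm *ᵥ z) + z ⬝ᵥ (Matrix.diagonal dm *ᵥ z) := by
    rw [← h1, ← hMz, dotProduct_comm, hMm, Matrix.add_mulVec, dotProduct_add,
      ← Matrix.mulVec_mulVec, Matrix.dotProduct_mulVec, Matrix.vecMul_transpose]
  have h3 : v ⬝ᵥ (Pmat Xm dm) *ᵥ v = v ⬝ᵥ v - v ⬝ᵥ (Xm *ᵥ z) := by
    rw [dot_P, h1]
  have h4 : (v - Xm *ᵥ z) ⬝ᵥ (v - Xm *ᵥ z)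
      = v ⬝ᵥ v - 2 * (v ⬝ᵥ (Xm *ᵥ z)) + (Xm *ᵥ z) ⬝ᵥ (Xm *ᵥ z) := by
    rw [dotProduct_sub, sub_dotProduct, sub_dotProduct,
      dotProduct_comm (Xm *ᵥ z) v]
    ring
  have h5 : 0 ≤ (v - Xm *ᵥ z) ⬝ᵥ (v - Xm *ᵥ z) := dot_self_nonneg _
  have h6 : 0 ≤ z ⬝ᵥ (Matrix.diagonal dm *ᵥ z) := by
    simp only [dotProduct, Matrix.mulVec_diagonal]
    exact Finset.sum_nonneg fun i _ => by nlinarith [(hdm i).le, mul_self_nonneg (z i)]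
  linarith

lemma dot_inv_symm {m : ℕ} (N : Matrix (Fin m) (Fin m) ℝ) (h : Nᵀ = N) (a b : Fin m → ℝ) :
    a ⬝ᵥ N *ᵥ b = b ⬝ᵥ N *ᵥ a := by
  rw [Matrix.dotProduct_mulVec, ← Matrix.mulVec_transpose, h, dotProduct_comm]

lemma cs_lemma (x : Fin n → ℝ) (Xm : Matrix (Fin n) (Fin p) ℝ) (y : Fin n → ℝ)
    (dm : Fin p → ℝ) (hdm : ∀ j, 0 < dm j) (hq : 0 < x ⬝ᵥ (Pmat Xm dm) *ᵥ x) :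
    (x ⬝ᵥ (Pmat Xm dm) *ᵥ y)^2
      ≤ (x ⬝ᵥ (Pmat Xm dm) *ᵥ x) * (y ⬝ᵥ (Pmat Xm dm) *ᵥ y) := by
  have hsym : y ⬝ᵥ (Pmat Xm dm) *ᵥ x = x ⬝ᵥ (Pmat Xm dm) *ᵥ y :=
    dot_inv_symm (Pmat Xm dm) (P_symm Xm dm) y x
  set s := x ⬝ᵥ (Pmat Xm dm) *ᵥ x with hsdef
  set u := x ⬝ᵥ (Pmat Xm dm) *ᵥ y with hudef
  set t := y ⬝ᵥ (Pmat Xm dm) *ᵥ y with htdef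
  set r := u / s with hr
  have hrs : r * s = u := div_mul_cancel₀ _ hq.ne'
  have h := P_psd Xm dm hdm (y - r • x)
  have e : (y - r • x) ⬝ᵥ (Pmat Xm dm) *ᵥ (y - r • x) = t - 2*r*u + r^2*s := by
    simp only [Matrix.mulVec_sub, Matrix.mulVec_smul, dotProduct_sub,
      sub_dotProduct, dotProduct_smul, smul_dotProduct, smul_eq_mul]
    rw [hsym, ← hudef, ← htdef, ← hsdef]
    ring
  rw [e] at h
  nlinarith [mul_nonneg hq.le h, hrs]

lemma block_eq (x : Fin n → ℝ) (Xm : Matrix (Fin n) (Fin p) ℝ) (dm : Fin p → ℝ) (dj : ℝ) :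
    (Xfull x Xm)ᵀ * Xfull x Xm + Matrix.diagonal (Sum.elim (fun _ => dj) dm)
    = Matrix.fromBlocks (Matrix.of fun _ _ => x ⬝ᵥ x + dj)
        (Matrix.of fun _ j => (Xmᵀ *ᵥ x) j) (Matrix.of fun j _ => (Xmᵀ *ᵥ x) j)
        (Xmᵀ * Xm + Matrix.diagonal dm) := by
  ext (i | i) (j | j) <;>
    simp [Xfull, Matrix.fromCols, Matrix.mul_apply, Matrix.diagonal, Matrix.mulVec,
      dotProduct, mul_comm]

lemma det_eq (x : Fin n → ℝ) (Xm : Matrix (Fin n) (Fin p) ℝ) (dm : Fin p → ℝ)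
    (hdm : ∀ j, 0 < dm j) (dj : ℝ) :
    ((Xfull x Xm)ᵀ * Xfull x Xm + Matrix.diagonal (Sum.elim (fun _ => dj) dm)).det
    = (Xmᵀ * Xm + Matrix.diagonal dm).det * (dj + x ⬝ᵥ (Pmat Xm dm) *ᵥ x) := by
  set Mm := Xmᵀ * Xm + Matrix.diagonal dm with hMm
  have hpd := mm_posDef Xm dm hdm
  haveI : Invertible Mm := Mm.invertibleOfIsUnitDet hpd.det_pos.ne'.isUnit
  rw [block_eq, Matrix.det_fromBlocks₂₂, Matrix.invOf_eq_nonsing_inv]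
  congr 1
  rw [Matrix.det_unique]
  set b := Xmᵀ *ᵥ x with hb
  have hBC : ((Matrix.of fun (_ : Unit) j => b j) * Mm⁻¹
        * Matrix.of fun j (_ : Unit) => b j) default default
      = b ⬝ᵥ (Mm⁻¹ *ᵥ b) := by
    rw [Matrix.mul_assoc]
    simp [Matrix.mul_apply, Matrix.of_apply, dotProduct, Matrix.mulVec]
  simp only [Matrix.sub_apply, Matrix.of_apply, hBC]
  rw [dot_P, ← hMm, hBC, ← hb]
  ring

lemma mf_posDef (x : Fin n → ℝ) (Xm : Matrix (Fin n) (Fin p) ℝ) (dm : Fin p → ℝ)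
    (hdm : ∀ j, 0 < dm j) (dj : ℝ) (hdj : 0 < dj) :
    ((Xfull x Xm)ᵀ * Xfull x Xm + Matrix.diagonal (Sum.elim (fun _ => dj) dm)).PosDef := by
  have h1 : ((Xfull x Xm)ᵀ * Xfull x Xm).PosSemidef := by
    simpa [Matrix.conjTranspose_eq_transpose_of_trivial] using
      Matrix.posSemidef_conjTranspose_mul_self (Xfull x Xm)
  refine Matrix.PosDef.posSemidef_add h1 (Matrix.PosDef.diagonal ?_)
  rintro (i | i) <;> simp [hdj, hdm]

lemma Xt_mulVec (x : Fin n → ℝ) (Xm : Matrix (Fin n) (Fin p) ℝ) (y : Fin n → ℝ) :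
    (Xfull x Xm)ᵀ *ᵥ y = Sum.elim (fun _ => x ⬝ᵥ y) (Xmᵀ *ᵥ y) := by
  ext (i | i) <;>
    simp [Xfull, Matrix.fromCols, Matrix.mulVec, dotProduct, mul_comm]

lemma unit_mulVec (a : ℝ) (v : Unit → ℝ) (i : Unit) :
    ((Matrix.of fun (_ _ : Unit) => a) *ᵥ v) i = a * v () := by
  simp [Matrix.mulVec, dotProduct]

lemma row_mulVec {m : ℕ} (b v : Fin m → ℝ) (i : Unit) :
    ((Matrix.of fun (_ : Unit) j => b j) *ᵥ v) i = b ⬝ᵥ v := rfl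

lemma col_mulVec {m : ℕ} (b : Fin m → ℝ) (v : Unit → ℝ) (i : Fin m) :
    ((Matrix.of fun j (_ : Unit) => b j) *ᵥ v) i = b i * v () := by
  simp [Matrix.mulVec, dotProduct]

lemma dot_sum_elim {m : ℕ} (a : ℝ) (f : Fin m → ℝ) (c : ℝ) (g : Fin m → ℝ) :
    (Sum.elim (fun (_ : Unit) => a) f) ⬝ᵥ (Sum.elim (fun _ => c) g) = a * c + f ⬝ᵥ g := by
  simp [dotProduct, Fintype.sum_sum_type]

lemma rss_eq (x : Fin n → ℝ) (Xm : Matrix (Fin n) (Fin p) ℝ) (y : Fin n → ℝ)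
    (dm : Fin p → ℝ) (hdm : ∀ j, 0 < dm j) (hq : 0 < x ⬝ᵥ (Pmat Xm dm) *ᵥ x)
    (dj : ℝ) (hdj : 0 < dj) :
    RSS x Xm y dm dj = y ⬝ᵥ (Pmat Xm dm) *ᵥ y
      - (x ⬝ᵥ (Pmat Xm dm) *ᵥ y)^2 / (dj + x ⬝ᵥ (Pmat Xm dm) *ᵥ x) := by
  set Mm := Xmᵀ * Xm + Matrix.diagonal dm with hMm
  have hpd := mm_posDef Xm dm hdm
  have hdet : IsUnit Mm.det := hpd.det_pos.ne'.isUnit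
  have hMmsymm : Mmᵀ = Mm := by rw [hMm]; exact mm_symm Xm dm
  set b := Xmᵀ *ᵥ x with hb
  set w := Xmᵀ *ᵥ y with hw
  set s := x ⬝ᵥ (Pmat Xm dm) *ᵥ x with hsdef
  set u := x ⬝ᵥ (Pmat Xm dm) *ᵥ y with hudef
  set t := y ⬝ᵥ (Pmat Xm dm) *ᵥ y with htdef
  have hs : b ⬝ᵥ (Mm⁻¹ *ᵥ b) = x ⬝ᵥ x - s := by rw [hsdef, dot_P]; ring
  have hu : b ⬝ᵥ (Mm⁻¹ *ᵥ w) = x ⬝ᵥ y - u := by rw [hudef, dot_P]; ring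
  have ht : w ⬝ᵥ (Mm⁻¹ *ᵥ w) = y ⬝ᵥ y - t := by rw [htdef, dot_P]; ring
  set zx := Mm⁻¹ *ᵥ b with hzx
  set zy := Mm⁻¹ *ᵥ w with hzy
  have hMzx : Mm *ᵥ zx = b := by
    rw [hzx, Matrix.mulVec_mulVec, Matrix.mul_nonsing_inv _ hdet, Matrix.one_mulVec]
  have hMzy : Mm *ᵥ zy = w := by
    rw [hzy, Matrix.mulVec_mulVec, Matrix.mul_nonsing_inv _ hdet, Matrix.one_mulVec]
  have hA : dj + s ≠ 0 := by positivity
  set β := u / (dj + s) with hβ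
  have hβA : β * (dj + s) = u := div_mul_cancel₀ _ hA
  set zf : (Unit ⊕ Fin p) → ℝ := Sum.elim (fun _ => β) (zy - β • zx) with hzf
  set Mf := (Xfull x Xm)ᵀ * Xfull x Xm + Matrix.diagonal (Sum.elim (fun _ => dj) dm) with hMf
  have hdetf : IsUnit Mf.det := (mf_posDef x Xm dm hdm dj hdj).det_pos.ne'.isUnit
  have hsol : Mf *ᵥ zf = Sum.elim (fun _ => x ⬝ᵥ y) w := by
    rw [hMf, block_eq, hzf, Matrix.fromBlocks_mulVec, Sum.elim_comp_inl, Sum.elim_comp_inr]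
    ext (i | i)
    · simp only [Sum.elim_inl, Pi.add_apply, unit_mulVec, row_mulVec]
      rw [← hb, dotProduct_sub, dotProduct_smul, hzy, hzx, hu, hs, smul_eq_mul]
      linear_combination hβA
    · simp only [Sum.elim_inr, Pi.add_apply, col_mulVec]
      rw [← hb, ← hMm]
      have h3 : Mm *ᵥ (zy - β • zx) = w - β • b := by
        rw [Matrix.mulVec_sub, Matrix.mulVec_smul, hMzx, hMzy]
      rw [h3]
      simp [mul_comm]
  have hinv : Mf⁻¹ *ᵥ (Sum.elim (fun _ => x ⬝ᵥ y) w) = zf := by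
    rw [← hsol, Matrix.mulVec_mulVec, Matrix.nonsing_inv_mul _ hdetf, Matrix.one_mulVec]
  have hdot : (Sum.elim (fun _ => x ⬝ᵥ y) w) ⬝ᵥ zf = y ⬝ᵥ y - t + β * u := by
    have hwzx : w ⬝ᵥ zx = x ⬝ᵥ y - u := by
      rw [hzx, ← hu, hzy]
      exact dot_inv_symm Mm⁻¹ (by rw [Matrix.transpose_nonsing_inv, hMmsymm]) w b
    have hwz : w ⬝ᵥ (zy - β • zx) = (y ⬝ᵥ y - t) - β * (x ⬝ᵥ y - u) := by
      rw [dotProduct_sub, dotProduct_smul, hzy, ht, hwzx, smul_eq_mul]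
    rw [hzf, dot_sum_elim, hwz]
    ring
  simp only [RSS]
  rw [← hMf, show (Xfull x Xm)ᵀ.mulVec y = Sum.elim (fun _ => x ⬝ᵥ y) w from
    (Xt_mulVec x Xm y).trans (by rw [hw]), show Mf⁻¹.mulVec (Sum.elim (fun _ => x ⬝ᵥ y) w) = zf
    from hinv, hdot, hβ]
  field_simp
  ring

end Aux

/-- `loss(D) = -(1/2)log det D + (1/2)log det(XᵀX+D) + (a₀+n/2)·log{b₀ + RSS(D)/2}`
as a function of `dⱼ` with the remaining precisions fixed. -/
noncomputable def loss {n p : ℕ} (x : Fin n → ℝ) (Xm : Matrix (Fin n) (Fin p) ℝ)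
    (y : Fin n → ℝ) (dm : Fin p → ℝ) (a0 b0 : ℝ) (dj : ℝ) : ℝ :=
  -(1/2) * Real.log ((Matrix.diagonal (Sum.elim (fun _ => dj) dm) :
      Matrix (Unit ⊕ Fin p) (Unit ⊕ Fin p) ℝ).det)
  + (1/2) * Real.log (((Xfull x Xm)ᵀ * Xfull x Xm
      + Matrix.diagonal (Sum.elim (fun _ => dj) dm)).det)
  + (a0 + n/2) * Real.log (b0 + RSS x Xm y dm dj / 2)

/-- The closed form of `∂ loss / ∂ dⱼ`. -/
noncomputable def dloss {n p : ℕ} (x : Fin n → ℝ) (Xm : Matrix (Fin n) (Fin p) ℝ)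
    (y : Fin n → ℝ) (dm : Fin p → ℝ) (a0 b0 : ℝ) (dj : ℝ) : ℝ :=
  -(x ⬝ᵥ (Pmat Xm dm).mulVec x) / (2 * dj * (dj + x ⬝ᵥ (Pmat Xm dm).mulVec x))
  + (a0 + n/2) * (x ⬝ᵥ (Pmat Xm dm).mulVec y)^2
      / (2 * (b0 + RSS x Xm y dm dj / 2) * (dj + x ⬝ᵥ (Pmat Xm dm).mulVec x)^2)

/-- Coordinate-wise divergence criterion: the partial derivative of the loss in `dⱼ`
has the stated closed form, and is strictly negative for all `dⱼ > 0` whenever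
`(xⱼᵀPⱼy)² < (b₀ + yᵀPⱼy/2)·xⱼᵀPⱼxⱼ/(a₀+n/2)`. -/
theorem stmt7 {n p : ℕ} (hn : 1 ≤ n) (x : Fin n → ℝ) (Xm : Matrix (Fin n) (Fin p) ℝ)
    (y : Fin n → ℝ) (dm : Fin p → ℝ) (hdm : ∀ j, 0 < dm j)
    (a0 b0 : ℝ) (ha0 : 0 < a0) (hb0 : 0 < b0)
    (hq : 0 < x ⬝ᵥ (Pmat Xm dm).mulVec x) :
    (∀ dj : ℝ, 0 < dj →
      HasDerivAt (loss x Xm y dm a0 b0) (dloss x Xm y dm a0 b0 dj) dj) ∧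
    ((x ⬝ᵥ (Pmat Xm dm).mulVec y)^2
        < (b0 + (y ⬝ᵥ (Pmat Xm dm).mulVec y) / 2) * (x ⬝ᵥ (Pmat Xm dm).mulVec x)
            / (a0 + n/2) →
      ∀ dj : ℝ, 0 < dj → dloss x Xm y dm a0 b0 dj < 0) := by
  have hMmpd := mm_posDef Xm dm hdm
  set s := x ⬝ᵥ (Pmat Xm dm).mulVec x with hsdef
  set u := x ⬝ᵥ (Pmat Xm dm).mulVec y with hudef
  set t := y ⬝ᵥ (Pmat Xm dm).mulVec y with htdef
  set c := a0 + (n:ℝ)/2 with hcdef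
  have hc : 0 < c := by positivity
  have hn1 : (1:ℝ) ≤ (n:ℝ) := by exact_mod_cast hn
  have hch : 1/2 < c := by rw [hcdef]; linarith
  have hq2 : 0 < x ⬝ᵥ (Pmat Xm dm).mulVec x := by rw [← hsdef]; exact hq
  have ht0 : 0 ≤ t := by rw [htdef]; exact P_psd Xm dm hdm y
  have hcs : u^2 ≤ s * t := by
    rw [hudef, hsdef, htdef]; exact cs_lemma x Xm y dm hdm hq2
  set K0 := ∏ j, dm j with hK0def
  have hK0 : 0 < K0 := Finset.prod_pos fun j _ => hdm j
  set K2 := (Xmᵀ * Xm + Matrix.diagonal dm).det with hK2def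
  have hK2 : 0 < K2 := hMmpd.det_pos
  clear_value s u t c K0 K2
  have hloss_eq : Set.EqOn (loss x Xm y dm a0 b0)
      (fun d => -(1/2) * Real.log (d * K0) + (1/2) * Real.log (K2 * (d + s))
        + c * Real.log (b0 + (t - u^2 * (d + s)⁻¹)/2)) (Set.Ioi (0:ℝ)) := by
    intro d hd
    have hd' : 0 < d := hd
    simp only [loss]
    rw [rss_eq x Xm y dm hdm hq2 d hd', det_eq x Xm dm hdm d]
    rw [← hsdef, ← hudef, ← htdef, ← hK2def, ← hcdef]
    have hdd : (Matrix.diagonal (Sum.elim (fun _ => d) dm) :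
        Matrix (Unit ⊕ Fin p) (Unit ⊕ Fin p) ℝ).det = d * K0 := by
      rw [Matrix.det_diagonal, hK0def]
      simp [Fintype.prod_sum_type]
    rw [hdd, div_eq_mul_inv (u^2)]
  constructor
  · intro dj hdj
    have hA : 0 < dj + s := by positivity
    have hu2 : u^2 ≤ (dj+s) * t := le_trans hcs (by nlinarith [mul_nonneg hdj.le ht0])
    have hdiv : u^2/(dj+s) ≤ t := (div_le_iff₀ hA).mpr (by nlinarith [hu2])
    have hB : 0 < b0 + (t - u^2/(dj+s))/2 := by linarith
    have hBne' : b0 + (t - u^2 * (dj+s)⁻¹)/2 ≠ 0 := by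
      rw [← div_eq_mul_inv]; exact hB.ne'
    have hd1 : dj * K0 ≠ 0 := by positivity
    have hd2 : K2 * (dj + s) ≠ 0 := by positivity
    have e1 : HasDerivAt (fun d : ℝ => -(1/2) * Real.log (d * K0))
        (-(1/2) * (1 * K0 / (dj * K0))) dj :=
      (((hasDerivAt_id dj).mul_const K0).log hd1).const_mul _
    have e2 : HasDerivAt (fun d : ℝ => (1/2) * Real.log (K2 * (d + s)))
        ((1/2) * (K2 * 1 / (K2 * (dj + s)))) dj :=
      ((((hasDerivAt_id dj).add_const s).const_mul K2).log hd2).const_mul _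
    have e3a : HasDerivAt (fun d : ℝ => (d + s)⁻¹) (-1 / (dj + s)^2) dj :=
      ((hasDerivAt_id dj).add_const s).inv hA.ne'
    have e3 : HasDerivAt (fun d : ℝ => c * Real.log (b0 + (t - u^2 * (d + s)⁻¹)/2))
        (c * ((-(u^2 * (-1 / (dj + s)^2)) / 2) / (b0 + (t - u^2 * (dj + s)⁻¹)/2))) dj :=
      (((((e3a.const_mul (u^2)).const_sub t).div_const 2).const_add b0).log hBne').const_mul _
    have hgd := (e1.add e2).add e3
    have hev : loss x Xm y dm a0 b0 =ᶠ[nhds dj]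
        (fun d => -(1/2) * Real.log (d * K0) + (1/2) * Real.log (K2 * (d + s))
          + c * Real.log (b0 + (t - u^2 * (d + s)⁻¹)/2)) :=
      Filter.eventuallyEq_of_mem (Ioi_mem_nhds hdj) hloss_eq
    have hld := hev.hasDerivAt_iff.mpr hgd
    refine hld.congr_deriv (Eq.symm ?_)
    simp only [dloss]
    rw [rss_eq x Xm y dm hdm hq2 dj hdj, ← hsdef, ← hudef, ← htdef, ← hcdef]
    rw [div_eq_mul_inv (u^2) (dj + s)]
    field_simp
    ring
  · intro hcond dj hdj
    have hA : 0 < dj + s := by positivity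
    have hu2 : u^2 ≤ (dj+s) * t := le_trans hcs (by nlinarith [mul_nonneg hdj.le ht0])
    have hdiv : u^2/(dj+s) ≤ t := (div_le_iff₀ hA).mpr (by nlinarith [hu2])
    have hB : 0 < b0 + (t - u^2/(dj+s))/2 := by linarith
    have hdl : dloss x Xm y dm a0 b0 dj
        = -s/(2*dj*(dj+s)) + c*u^2/(2*(b0 + (t - u^2/(dj+s))/2)*(dj+s)^2) := by
      simp only [dloss]
      rw [rss_eq x Xm y dm hdm hq2 dj hdj, ← hsdef, ← hudef, ← htdef, ← hcdef]
    rw [hdl]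
    rw [lt_div_iff₀ hc] at hcond
    have hclt : c * u^2 < (b0 + t/2) * s := by nlinarith [hcond]
    have hBA : (b0 + (t - u^2/(dj+s))/2) * (dj+s) = (b0 + t/2)*(dj+s) - u^2/2 := by
      field_simp
      ring
    have hkey : c*u^2*dj < s * ((b0 + (t - u^2/(dj+s))/2) * (dj+s)) := by
      rw [hBA]
      nlinarith [mul_lt_mul_of_pos_right hclt hdj, mul_lt_mul_of_pos_right hclt hq,
        mul_nonneg (mul_nonneg hq.le (sq_nonneg u)) (by linarith : (0:ℝ) ≤ c - 1/2)]
    have hlt : c * u^2 / (2*(b0 + (t - u^2/(dj+s))/2)*(dj+s)^2) < s / (2*dj*(dj+s)) := by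
      rw [div_lt_div_iff₀ (mul_pos (mul_pos (by norm_num : (0:ℝ) < 2) hB) (pow_pos hA 2))
        (by positivity)]
      nlinarith [mul_lt_mul_of_pos_left hkey (show (0:ℝ) < 2*(dj+s) by positivity)]
    have hng : -s/(2*dj*(dj+s)) = -(s/(2*dj*(dj+s))) := by ring
    linarith [hlt]
end
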